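/- Let n_1, …, n_r be positive integers each dividing n! for a fixed n, and suppose Π_{i=1}^r gcd(k, n_i) = Π_{i=1}^r gcd(l, n_i) does NOT in general imply gcd(k, n_i) = gcd(l, n_i) for each i; however, if additionally the multiset isomorphism of groups Π_i Z/gcd(k, n_i) ≅ Π_i Z/gcd(l, n_i) holds, then gcd(k, lcm(n_1,…,n_r)) = gcd(l, lcm(n_1,…,n_r)). -/
import Mathlib

open Finset

private lemma nat_gcd_lcm_distrib (a b c : ℕ) (hb : b ≠ 0) (hc : c ≠ 0) :
    Nat.gcd a (Nat.lcm b c) = Nat.lcm (Nat.gcd a b) (Nat.gcd a c) := by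
  rcases eq_or_ne a 0 with rfl | ha
  · simp
  · have hbc : Nat.lcm b c ≠ 0 := Nat.lcm_ne_zero hb hc
    have h1 : Nat.gcd a (Nat.lcm b c) ≠ 0 := fun h => ha (Nat.eq_zero_of_gcd_eq_zero_left h)
    have hab : Nat.gcd a b ≠ 0 := fun h => ha (Nat.eq_zero_of_gcd_eq_zero_left h)
    have hac : Nat.gcd a c ≠ 0 := fun h => ha (Nat.eq_zero_of_gcd_eq_zero_left h)
    refine Nat.eq_of_factorization_eq h1 (Nat.lcm_ne_zero hab hac) fun p => ?_
    rw [Nat.factorization_gcd ha hbc, Nat.factorization_lcm hb hc,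
      Nat.factorization_lcm hab hac, Nat.factorization_gcd ha hb, Nat.factorization_gcd ha hc]
    simp only [Finsupp.inf_apply, Finsupp.sup_apply]
    exact inf_sup_left _ _ _

private lemma gcd_finset_lcm_distrib {ι : Type*} [DecidableEq ι] (a : ℕ) (s : Finset ι) (m : ι → ℕ)
    (hm : ∀ i ∈ s, m i ≠ 0) :
    Nat.gcd a (s.lcm m) = s.lcm fun i => Nat.gcd a (m i) := by
  induction s using Finset.induction with
  | empty => simp [Nat.gcd_one_right]
  | @insert i s his ih =>
    have h1 : m i ≠ 0 := hm i (mem_insert_self i s)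
    have h2 : s.lcm m ≠ 0 := by
      simp only [ne_eq, Finset.lcm_eq_zero_iff]
      rintro ⟨j, hj, hj0⟩
      exact hm j (mem_insert_of_mem hj) hj0
    rw [Finset.lcm_insert, Finset.lcm_insert, ← ih fun j hj => hm j (mem_insert_of_mem hj),
      lcm_eq_nat_lcm, lcm_eq_nat_lcm]
    exact nat_gcd_lcm_distrib a (m i) (s.lcm m) h1 h2

private lemma factorization_finset_lcm {ι : Type*} [DecidableEq ι] (s : Finset ι) (m : ι → ℕ)
    (hm : ∀ i ∈ s, m i ≠ 0) (p : ℕ) :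
    (s.lcm m).factorization p = s.sup fun i => (m i).factorization p := by
  induction s using Finset.induction with
  | empty => simp
  | @insert i s his ih =>
    have h1 : m i ≠ 0 := hm i (mem_insert_self i s)
    have h2 : s.lcm m ≠ 0 := by
      simp only [ne_eq, Finset.lcm_eq_zero_iff]
      rintro ⟨j, hj, hj0⟩
      exact hm j (mem_insert_of_mem hj) hj0
    rw [Finset.lcm_insert, Finset.sup_insert, lcm_eq_nat_lcm, Nat.factorization_lcm h1 h2,
      ← ih fun j hj => hm j (mem_insert_of_mem hj)]
    simp [Finsupp.sup_apply]

/-- Let `n₁, …, n_r` be positive integers each dividing `N!`. If the products of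
cyclic groups `∏ᵢ ℤ/gcd(k,nᵢ)` and `∏ᵢ ℤ/gcd(l,nᵢ)` are isomorphic as abelian
groups, then for every prime `p` the maximal `p`-adic valuations agree,
`max_i v_p(gcd(k,nᵢ)) = max_i v_p(gcd(l,nᵢ))`, and hence
`gcd(k, lcm(n₁,…,n_r)) = gcd(l, lcm(n₁,…,n_r))`. -/
theorem stmt_13 (r N : ℕ) (n : Fin r → ℕ) (hn : ∀ i, 0 < n i)
    (hdvd : ∀ i, n i ∣ Nat.factorial N) (k l : ℤ)
    (h : Nonempty ((∀ i, ZMod (Int.gcd k (n i))) ≃+ (∀ i, ZMod (Int.gcd l (n i))))) :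
    (∀ p : ℕ, p.Prime →
      (Finset.univ.sup fun i => (Int.gcd k (n i)).factorization p) =
        (Finset.univ.sup fun i => (Int.gcd l (n i)).factorization p)) ∧
    Int.gcd k (Finset.univ.lcm n : ℕ) = Int.gcd l (Finset.univ.lcm n : ℕ) := by
  obtain ⟨e⟩ := h
  have hexp := AddMonoid.exponent_eq_of_addEquiv e
  rw [AddMonoid.exponent_pi, AddMonoid.exponent_pi] at hexp
  simp only [ZMod.exponent] at hexp
  -- hexp : univ.lcm (fun i => Int.gcd k (n i)) = univ.lcm (fun i => Int.gcd l (n i))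
  have hA : ∀ i ∈ (univ : Finset (Fin r)), Int.gcd k (n i) ≠ 0 := fun i _ => by
    simp [Int.gcd_eq_zero_iff, (hn i).ne']
  have hB : ∀ i ∈ (univ : Finset (Fin r)), Int.gcd l (n i) ≠ 0 := fun i _ => by
    simp [Int.gcd_eq_zero_iff, (hn i).ne']
  constructor
  · intro p _
    rw [← factorization_finset_lcm _ _ hA p, ← factorization_finset_lcm _ _ hB p, hexp]
  · have hk : Int.gcd k (Finset.univ.lcm n : ℕ) = Nat.gcd k.natAbs (Finset.univ.lcm n) := rfl
    have hl : Int.gcd l (Finset.univ.lcm n : ℕ) = Nat.gcd l.natAbs (Finset.univ.lcm n) := rfl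
    have hn0 : ∀ i ∈ (univ : Finset (Fin r)), n i ≠ 0 := fun i _ => (hn i).ne'
    rw [hk, hl, gcd_finset_lcm_distrib _ _ _ hn0, gcd_finset_lcm_distrib _ _ _ hn0]
    have h1 : ∀ i, Nat.gcd k.natAbs (n i) = Int.gcd k (n i) := fun i => rfl
    have h2 : ∀ i, Nat.gcd l.natAbs (n i) = Int.gcd l (n i) := fun i => rfl
    simp only [h1, h2]
    exact hexp
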